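/- Let c ∈ [1, 72/71), γ = 1/c, h ∈ F_c, and φ the inverse of h. Assume A₀ ⊆ P_h satisfies limsup_{n→∞} (log n / φ(n)) · |A₀ ∩ P_h ∩ [n, 2n]| > α₀ > 0 and that A₀ does not contain any arithmetic progression of length three. Then there exists a real number α > 0 (which may depend on φ and γ) and infinitely many primes N with the following property: there exist a set A = A_N ⊆ {1, 2, ..., ⌊N/2⌋} and an integer W ∈ [1/8 · log log N, 1/2 · log log N] such that A does not contain any arithmetic progression of length three, and λ^h_{b,m,N}(A) ≥ α for some 0 ≤ b ≤ m − 1 with gcd(b, m) = 1, where m = ∏_{p ∈ P, p ≤ W} p. -/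

import Mathlib

open Filter Real Set
open scoped Classical

structure Fc (c : ℝ) where
  x₀ : ℝ
  one_le_x₀ : 1 ≤ x₀
  toFun : ℝ → ℝ
  vth : ℝ → ℝ
  Ch : ℝ
  Ch_pos : 0 < Ch
  one_le : ∀ x ≥ x₀, 1 ≤ toFun x
  contDiffOn : ContDiffOn ℝ 3 toFun (Set.Ici x₀)
  deriv_pos : ∀ x ≥ x₀, 0 < deriv toFun x
  deriv2_pos : ∀ x ≥ x₀, 0 < iteratedDeriv 2 toFun x
  vth_contDiffOn : ContDiffOn ℝ 2 vth (Set.Ici x₀)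
  eqn : ∀ x ≥ x₀, toFun x = Ch * x ^ c * Real.exp (∫ t in x₀..x, vth t / t)
  cond_gt : 1 < c →
    Filter.Tendsto vth Filter.atTop (nhds 0) ∧
    Filter.Tendsto (fun x => x * deriv vth x) Filter.atTop (nhds 0) ∧
    Filter.Tendsto (fun x => x ^ 2 * deriv (deriv vth) x) Filter.atTop (nhds 0)
  cond_eq : c = 1 →
    (∀ x ≥ x₀, 0 < vth x) ∧
    (∀ x y, x₀ ≤ x → x ≤ y → vth y ≤ vth x) ∧
    (∀ ε : ℝ, 0 < ε → ∃ C > 0, ∀ x ≥ x₀, 1 / vth x ≤ C * x ^ ε) ∧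
    Filter.Tendsto (fun x => x / toFun x) Filter.atTop (nhds 0) ∧
    Filter.Tendsto vth Filter.atTop (nhds 0) ∧
    Filter.Tendsto (fun x => x * deriv vth x / vth x) Filter.atTop (nhds 0) ∧
    Filter.Tendsto (fun x => x ^ 2 * deriv (deriv vth) x / vth x) Filter.atTop (nhds 0)

def Ph {c : ℝ} (F : Fc c) : Set ℕ :=
  {p : ℕ | p.Prime ∧ ∃ n : ℕ, F.x₀ ≤ (n : ℝ) ∧ (p : ℤ) = ⌊F.toFun n⌋}

noncomputable def e (t : ℝ) : ℂ := Complex.exp (2 * Real.pi * Complex.I * t)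

/-- The measure `λ^h_{b,m,N}` on `Λ^h_{b,m,N} = {0 ≤ n ≤ N : mn + b ∈ P_h}`:
`λ^h_{b,m,N}(n) = ϕ(m) log(mn+b) / (m N φ'(mn+b))` there and `0` otherwise. -/
noncomputable def lamh {c : ℝ} (F : Fc c) (φ : ℝ → ℝ) (b m N n : ℕ) : ℝ :=
  if n ≤ N ∧ m * n + b ∈ Ph F then
    (Nat.totient m : ℝ) * Real.log (m * n + b) / (m * N * deriv φ ((m * n + b : ℕ) : ℝ))
  else 0

namespace Fc
variable {c : ℝ} (F : Fc c)

lemma hx0_pos : (0:ℝ) < F.x₀ := lt_of_lt_of_le one_pos F.one_le_x₀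

lemma contAt {x : ℝ} (hx : F.x₀ < x) : ContDiffAt ℝ 3 F.toFun x :=
  F.contDiffOn.contDiffAt (Ici_mem_nhds hx)

lemma diffAt {x : ℝ} (hx : F.x₀ < x) : DifferentiableAt ℝ F.toFun x :=
  (F.contAt hx).differentiableAt (by norm_num)

lemma mono : StrictMonoOn F.toFun (Set.Ici F.x₀) := by
  apply strictMonoOn_of_deriv_pos (convex_Ici _) F.contDiffOn.continuousOn
  intro x hx
  rw [interior_Ici] at hx
  exact F.deriv_pos x hx.le

lemma deriv_mono : ∀ a b : ℝ, F.x₀ < a → a ≤ b → deriv F.toFun a ≤ deriv F.toFun b := by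
  have h3 : ContDiffOn ℝ (2+1) F.toFun (Set.Ioi F.x₀) := by
    have := F.contDiffOn.mono (Ioi_subset_Ici (le_refl F.x₀))
    norm_num at this ⊢
    exact this
  have hd : ContDiffOn ℝ 2 (deriv F.toFun) (Set.Ioi F.x₀) :=
    ((contDiffOn_succ_iff_deriv_of_isOpen isOpen_Ioi).1 h3).2.2
  have hsm : StrictMonoOn (deriv F.toFun) (Set.Ioi F.x₀) := by
    apply strictMonoOn_of_deriv_pos (convex_Ioi _) hd.continuousOn
    intro x hx
    rw [interior_Ioi] at hx
    have h2 := F.deriv2_pos x (le_of_lt hx)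
    rwa [iteratedDeriv_succ, iteratedDeriv_one] at h2
  intro a b ha hab
  rcases eq_or_lt_of_le hab with rfl | h
  · exact le_refl _
  · exact (hsm ha (lt_trans ha h) h).le

lemma slope_le {x : ℝ} (hx : F.x₀ < x) :
    (F.toFun x - F.toFun F.x₀) / (x - F.x₀) ≤ deriv F.toFun x := by
  obtain ⟨ξ, hξ, hslope⟩ := exists_deriv_eq_slope F.toFun hx
    (F.contDiffOn.continuousOn.mono (Icc_subset_Ici_self))
    (fun y hy => (F.diffAt hy.1).differentiableWithinAt)
  rw [← hslope]
  exact F.deriv_mono ξ x hξ.1 hξ.2.le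

end Fc

section PhiLemmas
variable (x₀ : ℝ) (h φ : ℝ → ℝ)
variable (hmono : StrictMonoOn h (Set.Ici x₀))
variable (hφ₂ : ∀ y ≥ h x₀, h (φ y) = y)
variable (hφ₃ : ∀ y ≥ h x₀, x₀ ≤ φ y)
variable (hdiff : ∀ x, x₀ < x → DifferentiableAt ℝ h x)
variable (hdpos : ∀ x ≥ x₀, 0 < deriv h x)
variable (hslope : ∀ x, x₀ < x → (h x - h x₀) / (x - x₀) ≤ deriv h x)
variable (hdmono : ∀ a b : ℝ, x₀ < a → a ≤ b → deriv h a ≤ deriv h b)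
variable (hx₀ : 1 ≤ x₀) (hhx₀ : 1 ≤ h x₀)

include hφ₂ hφ₃ in
lemma phi_gt {y : ℝ} (hy : h x₀ < y) : x₀ < φ y := by
  rcases lt_or_eq_of_le (hφ₃ y hy.le) with h1 | h1
  · exact h1
  · exfalso; have := hφ₂ y hy.le; rw [← h1] at this; linarith

include hmono hφ₂ hφ₃ in
lemma phi_mono {y z : ℝ} (hy : h x₀ ≤ y) (hyz : y ≤ z) : φ y ≤ φ z := by
  by_contra hc
  push_neg at hc
  have h1 := hmono (hφ₃ z (hy.trans hyz)) (hφ₃ y hy) hc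
  rw [hφ₂ y hy, hφ₂ z (hy.trans hyz)] at h1
  linarith

include hmono hφ₂ hφ₃ in
lemma phi_contAt {y : ℝ} (hy : h x₀ < y) : ContinuousAt φ y := by
  have hx : x₀ < φ y := phi_gt x₀ h φ hφ₂ hφ₃ hy
  have hhx : h (φ y) = y := hφ₂ y hy.le
  rw [Metric.continuousAt_iff]
  intro ε hε
  set x := φ y with hxdef
  set ε' : ℝ := min (ε/2) ((x - x₀)/2) with hε'
  have hε'pos : 0 < ε' := lt_min (by linarith) (by linarith)
  have hε'lt : ε' < ε := lt_of_le_of_lt (min_le_left _ _) (by linarith)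
  have hxε : x₀ < x - ε' := by
    have : ε' ≤ (x - x₀)/2 := min_le_right _ _
    linarith
  have hmem1 : x - ε' ∈ Set.Ici x₀ := le_of_lt hxε
  have hmem2 : x ∈ Set.Ici x₀ := hx.le
  have hmem3 : x + ε' ∈ Set.Ici x₀ := by simp only [Set.mem_Ici]; linarith [hx.le]
  have hlt1 : h (x - ε') < y := by
    rw [← hhx]; exact hmono hmem1 hmem2 (by linarith)
  have hlt2 : y < h (x + ε') := by
    rw [← hhx]; exact hmono hmem2 hmem3 (by linarith)
  refine ⟨min (y - h (x - ε')) (h (x + ε') - y), lt_min (by linarith) (by linarith), ?_⟩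
  intro z hz
  rw [Real.dist_eq, abs_lt] at hz
  have hz1 : h (x - ε') < z := by
    have := hz.1; have h2 := min_le_left (y - h (x - ε')) (h (x + ε') - y); linarith
  have hz2 : z < h (x + ε') := by
    have := hz.2; have h2 := min_le_right (y - h (x - ε')) (h (x + ε') - y); linarith
  have hzge : h x₀ ≤ z := by
    have : h x₀ ≤ h (x - ε') := by
      rcases eq_or_lt_of_le (show x₀ ≤ x - ε' from hxε.le) with he | hl
      · rw [← he]
      · exact (hmono (Set.mem_Ici.mpr le_rfl) hmem1 hl).le
    linarith
  have hφz : h (φ z) = z := hφ₂ z hzge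
  have hφzge : x₀ ≤ φ z := hφ₃ z hzge
  have hb1 : x - ε' < φ z := by
    by_contra hcc
    push_neg at hcc
    have := hmono.monotoneOn (Set.mem_Ici.mpr hφzge) hmem1 hcc
    rw [hφz] at this; linarith
  have hb2 : φ z < x + ε' := by
    by_contra hcc
    push_neg at hcc
    have := hmono.monotoneOn hmem3 (Set.mem_Ici.mpr hφzge) hcc
    rw [hφz] at this; linarith
  rw [Real.dist_eq, abs_lt]
  constructor <;> [linarith; linarith]

include hmono hφ₂ hφ₃ hdiff hdpos in
lemma phi_hasDeriv {y : ℝ} (hy : h x₀ < y) :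
    HasDerivAt φ (deriv h (φ y))⁻¹ y := by
  have hx : x₀ < φ y := phi_gt x₀ h φ hφ₂ hφ₃ hy
  apply HasDerivAt.of_local_left_inverse (phi_contAt x₀ h φ hmono hφ₂ hφ₃ hy)
    ((hdiff _ hx).hasDerivAt) (ne_of_gt (hdpos _ hx.le))
  filter_upwards [Ioi_mem_nhds hy] with z hz
  exact hφ₂ z (le_of_lt hz)

include hmono hφ₂ hφ₃ hdiff hdpos hslope hhx₀ hx₀ in
lemma phi_key {y : ℝ} (hy : 2 * h x₀ ≤ y) :
    y / (2 * φ y) ≤ deriv h (φ y) := by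
  have hy1 : h x₀ < y := by linarith
  have hx : x₀ < φ y := phi_gt x₀ h φ hφ₂ hφ₃ hy1
  have hx₀pos : (0:ℝ) < x₀ := by linarith
  have hs := hslope _ hx
  rw [hφ₂ y hy1.le] at hs
  refine le_trans ?_ hs
  rw [div_le_div_iff₀ (by linarith) (by linarith)]
  nlinarith [hy1, hx]

include hmono hφ₂ hφ₃ hdiff hdpos hslope hhx₀ hx₀ in
lemma phi_deriv_bound {y : ℝ} (hy : 2 * h x₀ ≤ y) :
    0 < deriv φ y ∧ deriv φ y ≤ 2 * φ y / y := by
  have hy1 : h x₀ < y := by linarith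
  have hx : x₀ < φ y := phi_gt x₀ h φ hφ₂ hφ₃ hy1
  have hD := (phi_hasDeriv x₀ h φ hmono hφ₂ hφ₃ hdiff hdpos hy1).deriv
  have hdp := hdpos _ hx.le
  have hyd : 0 < y := by linarith
  have hφpos : 0 < φ y := by linarith
  have key := phi_key x₀ h φ hmono hφ₂ hφ₃ hdiff hdpos hslope hx₀ hhx₀ hy
  refine ⟨by rw [hD]; positivity, ?_⟩
  rw [hD]
  have h2 : (deriv h (φ y))⁻¹ ≤ (y / (2 * φ y))⁻¹ :=
    inv_anti₀ (by positivity) key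
  rwa [inv_div] at h2

include hmono hφ₂ hφ₃ hdiff hdpos hslope hdmono hhx₀ hx₀ in
lemma phi_double {y : ℝ} (hy : 2 * h x₀ ≤ y) : φ (2 * y) ≤ 3 * φ y := by
  have hy1 : h x₀ < y := by linarith
  have hx : x₀ < φ y := phi_gt x₀ h φ hφ₂ hφ₃ hy1
  have hhxy : h (φ y) = y := hφ₂ y hy1.le
  have hx₀pos : (0:ℝ) < x₀ := by linarith
  have hφpos : (0:ℝ) < φ y := by linarith
  obtain ⟨ξ, hξ, hslope2⟩ := exists_deriv_eq_slope h (show φ y < 3 * φ y by linarith)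
    (fun z hz => ((hdiff z (lt_of_lt_of_le hx hz.1)).continuousAt.continuousWithinAt))
    (fun z hz => (hdiff z (lt_trans hx hz.1)).differentiableWithinAt)
  have key := phi_key x₀ h φ hmono hφ₂ hφ₃ hdiff hdpos hslope hx₀ hhx₀ hy
  have hmono' : deriv h (φ y) ≤ deriv h ξ := hdmono _ _ hx hξ.1.le
  have hval : h (3 * φ y) - h (φ y) = deriv h ξ * (3 * φ y - φ y) := by
    rw [hslope2, div_mul_cancel₀]
    exact ne_of_gt (by linarith)
  have h3x : 2 * y ≤ h (3 * φ y) := by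
    have hge : deriv h ξ * (3 * φ y - φ y) ≥ (y / (2 * φ y)) * (2 * φ y) := by
      have : (0:ℝ) < 3 * φ y - φ y := by linarith
      nlinarith [le_trans key hmono']
    rw [div_mul_cancel₀] at hge
    · linarith [hval, hge, hhxy]
    · positivity
  by_contra hc
  push_neg at hc
  have h2y : h x₀ ≤ 2 * y := by linarith
  have := hmono (Set.mem_Ici.mpr (by linarith : x₀ ≤ 3 * φ y)) (Set.mem_Ici.mpr (hφ₃ _ h2y)) hc
  rw [hφ₂ _ h2y] at this
  linarith

end PhiLemmas

set_option maxHeartbeats 4000000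

/-- **Lemma 5.2 of the paper (transference).** If `A₀ ⊆ P_h` has relative upper density
`> α₀ > 0` along dyadic blocks and contains no three-term arithmetic progression, then
there is `α > 0` and infinitely many primes `N` for which there are
`A ⊆ {1, …, ⌊N/2⌋}` and `W ∈ [⅛ log log N, ½ log log N]` such that `A` contains no
three-term AP and `λ^h_{b,m,N}(A) ≥ α` for some `0 ≤ b ≤ m-1`, `(b, m) = 1`,
`m = ∏_{p ≤ W} p`. -/

theorem transference_principle {c : ℝ} (hc₁ : 1 ≤ c) (hc₂ : c < 72 / 71) (F : Fc c)
    (γ : ℝ) (hγ : γ = 1 / c)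
    (φ : ℝ → ℝ) (hφ₁ : ∀ x ≥ F.x₀, φ (F.toFun x) = x)
    (hφ₂ : ∀ y ≥ F.toFun F.x₀, F.toFun (φ y) = y)
    (hφ₃ : ∀ y ≥ F.toFun F.x₀, F.x₀ ≤ φ y)
    (A₀ : Set ℕ) (hA₀ : A₀ ⊆ Ph F)
    (α₀ : ℝ) (hα₀ : 0 < α₀)
    (hdens : α₀ < Filter.limsup (fun n : ℕ =>
      Real.log n / φ n * (Nat.card ↥(A₀ ∩ Ph F ∩ Set.Icc n (2 * n)) : ℝ)) Filter.atTop)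
    (hnoAP : ¬ ∃ a ∈ A₀, ∃ d : ℕ, d ≠ 0 ∧ a + d ∈ A₀ ∧ a + 2 * d ∈ A₀) :
    ∃ α > 0, {N : ℕ | N.Prime ∧
      ∃ A : Finset ℕ, A ⊆ Finset.Icc 1 (N / 2) ∧
      ∃ W : ℕ, (1 / 8 : ℝ) * Real.log (Real.log N) ≤ W ∧
        (W : ℝ) ≤ (1 / 2 : ℝ) * Real.log (Real.log N) ∧
        (¬ ∃ a ∈ A, ∃ d : ℕ, d ≠ 0 ∧ a + d ∈ A ∧ a + 2 * d ∈ A) ∧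
        ∃ b : ℕ, b ≤ primorial W - 1 ∧ Nat.gcd b (primorial W) = 1 ∧
          α ≤ ∑ n ∈ A, lamh F φ b (primorial W) N n}.Infinite := by
  classical
  have hx₀1 : 1 ≤ F.x₀ := F.one_le_x₀
  have hhx₀1 : 1 ≤ F.toFun F.x₀ := F.one_le _ le_rfl
  have hmono := F.mono
  have hdiff : ∀ x, F.x₀ < x → DifferentiableAt ℝ F.toFun x := fun x hx => F.diffAt hx
  have hdpos := F.deriv_pos
  have hslopeF : ∀ x, F.x₀ < x → (F.toFun x - F.toFun F.x₀) / (x - F.x₀) ≤ deriv F.toFun x :=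
    fun x hx => F.slope_le hx
  have hdmono := F.deriv_mono
  have hDb : ∀ y : ℝ, 2 * F.toFun F.x₀ ≤ y → 0 < deriv φ y ∧ deriv φ y ≤ 2 * φ y / y :=
    fun y hy => phi_deriv_bound F.x₀ F.toFun φ hmono hφ₂ hφ₃ hdiff hdpos hslopeF hx₀1 hhx₀1 hy
  have hdouble : ∀ y : ℝ, 2 * F.toFun F.x₀ ≤ y → φ (2 * y) ≤ 3 * φ y :=
    fun y hy => phi_double F.x₀ F.toFun φ hmono hφ₂ hφ₃ hdiff hdpos hslopeF hdmono hx₀1 hhx₀1 hy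
  have hpm : ∀ y z : ℝ, F.toFun F.x₀ ≤ y → y ≤ z → φ y ≤ φ z :=
    fun y z hy hyz => phi_mono F.x₀ F.toFun φ hmono hφ₂ hφ₃ hy hyz
  refine ⟨α₀ / 96, by positivity, ?_⟩
  apply Set.infinite_of_not_bddAbove
  rintro ⟨u, hu⟩
  -- extract a good `n`, large enough
  have hfreq : ∃ᶠ n : ℕ in atTop, α₀ < Real.log n / φ n *
      (Nat.card ↥(A₀ ∩ Ph F ∩ Set.Icc n (2 * n)) : ℝ) := by
    refine Filter.frequently_lt_of_lt_limsup ?_ hdens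
    refine ⟨0, fun a ha => ?_⟩
    rw [Filter.eventually_map] at ha
    obtain ⟨n, hn1, hn2⟩ := (ha.and (eventually_ge_atTop (max 1 ⌈F.toFun F.x₀⌉₊))).exists
    refine le_trans ?_ hn1
    have h1 : (1:ℝ) ≤ (n:ℝ) := by
      have := le_trans (le_max_left 1 ⌈F.toFun F.x₀⌉₊) hn2; exact_mod_cast this
    have h2 : F.toFun F.x₀ ≤ (n:ℝ) :=
      le_trans (Nat.le_ceil _) (by exact_mod_cast le_trans (le_max_right _ _) hn2)
    have h3 : 0 < φ (n:ℝ) := lt_of_lt_of_le (by linarith) (hφ₃ _ h2)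
    have h4 : 0 ≤ Real.log n := Real.log_nonneg h1
    positivity
  set X : ℝ := max (max 4096 (2 * F.toFun F.x₀)) (max (Real.exp (Real.exp 7)) (((u:ℝ)+1)^2))
    with hXdef
  obtain ⟨n, hgood, hnX⟩ := (hfreq.and_eventually (eventually_ge_atTop ⌈X⌉₊)).exists
  set R : ℝ := (n:ℝ) with hRdef
  have hXR : X ≤ R := le_trans (Nat.le_ceil X) (Nat.cast_le.mpr hnX)
  have hR4096 : (4096:ℝ) ≤ R := le_trans (le_trans (le_max_left _ _) (le_max_left _ _)) hXR
  have hR2h : 2 * F.toFun F.x₀ ≤ R := le_trans (le_trans (le_max_right _ _) (le_max_left _ _)) hXR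
  have hRexp : Real.exp (Real.exp 7) ≤ R := le_trans (le_trans (le_max_left _ _) (le_max_right _ _)) hXR
  have hRu : ((u:ℝ)+1)^2 ≤ R := le_trans (le_trans (le_max_right _ _) (le_max_right _ _)) hXR
  have hRpos : (0:ℝ) < R := by linarith
  have hhx₀R : F.toFun F.x₀ ≤ R := by linarith
  -- logarithm bounds
  have hlogRpos : 0 < Real.log R := Real.log_pos (by nlinarith)
  have hL7 : 7 ≤ Real.log (Real.log R) := by
    have h1 : Real.exp 7 ≤ Real.log R := by
      have := (Real.log_le_log_iff (Real.exp_pos _) hRpos).mpr hRexp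
      rwa [Real.log_exp] at this
    have := (Real.log_le_log_iff (Real.exp_pos _) hlogRpos).mpr h1
    rwa [Real.log_exp] at this
  have hlogR8 : 8 ≤ Real.log R := by
    have h1 : Real.exp 7 ≤ Real.log R := by
      have := (Real.log_le_log_iff (Real.exp_pos _) hRpos).mpr hRexp
      rwa [Real.log_exp] at this
    have := Real.add_one_le_exp 7
    linarith
  -- fourth root
  set r : ℝ := Real.sqrt (Real.sqrt R) with hrdef
  have hr0 : 0 ≤ r := Real.sqrt_nonneg _
  have hr2 : r^2 = Real.sqrt R := Real.sq_sqrt (Real.sqrt_nonneg _)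
  have hr4 : r^4 = R := by
    have h2 : (Real.sqrt R)^2 = R := Real.sq_sqrt hRpos.le
    nlinarith [hr2]
  have hr8 : (8:ℝ) ≤ r := by
    by_contra hcc
    push_neg at hcc
    have h1 : r^2 < 64 := by nlinarith
    have h2 : r^4 < 4096 := by nlinarith [sq_nonneg r]
    linarith
  have hlogr : Real.log R = 4 * Real.log r := by
    rw [← hr4, Real.log_pow]; norm_num
  have hlogR4r : Real.log R ≤ 4 * r := by
    rw [hlogr]
    have : Real.log r ≤ r - 1 := Real.log_le_sub_one_of_pos (by linarith)
    linarith
  -- W and m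
  set L : ℝ := Real.log (Real.log R) with hLdef
  set W : ℕ := ⌈L/8⌉₊ + 1 with hWdef
  set m : ℕ := primorial W with hmdef
  have hm0 : 0 < m := primorial_pos W
  have hWub : (W:ℝ) ≤ L/8 + 2 := by
    have := Nat.ceil_lt_add_one (show (0:ℝ) ≤ L/8 by linarith)
    push_cast [hWdef]
    linarith
  have hWlb : L/8 + 1 ≤ (W:ℝ) := by
    have := Nat.le_ceil (L/8)
    push_cast [hWdef]
    linarith
  have hlog4 : (0:ℝ) ≤ Real.log 4 := Real.log_nonneg (by norm_num)
  have hlog4le : Real.log 4 ≤ 3 := by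
    have := Real.log_le_sub_one_of_pos (show (0:ℝ) < 4 by norm_num)
    linarith
  have hm16 : (m:ℝ) ≤ 16 * Real.log R := by
    have h1 : (m:ℝ) ≤ (4:ℝ)^(W:ℕ) := by
      have := primorial_le_4_pow W
      exact_mod_cast this
    have h2 : (4:ℝ)^(W:ℕ) = Real.exp ((W:ℝ) * Real.log 4) := by
      rw [Real.exp_nat_mul, Real.exp_log (by norm_num)]
    have h3 : (W:ℝ) * Real.log 4 ≤ L + 2 * Real.log 4 := by
      have : (W:ℝ) * Real.log 4 ≤ (L/8 + 2) * Real.log 4 :=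
        mul_le_mul_of_nonneg_right hWub hlog4
      nlinarith [hL7]
    have h4 : Real.exp ((W:ℝ) * Real.log 4) ≤ Real.exp (L + 2 * Real.log 4) :=
      Real.exp_le_exp.mpr h3
    have h5 : Real.exp (L + 2 * Real.log 4) = Real.log R * 16 := by
      rw [Real.exp_add, Real.exp_log hlogRpos]
      congr 1
      rw [two_mul, Real.exp_add, Real.exp_log (by norm_num : (0:ℝ) < 4)]
      norm_num
    rw [h2] at h1
    linarith
  have hm64r : (m:ℝ) ≤ 64 * r := by linarith
  have hm8R : 8 * (m:ℝ) ≤ R := by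
    have hr3 : (512:ℝ) ≤ r^3 := by nlinarith [hr8, hr0]
    have h512 : 512 * r ≤ R := by nlinarith [hr3, hr0, hr4]
    linarith
  have hm2R : 2 * (m:ℝ) ≤ R := by linarith
  have hm2n : 2 * m ≤ n := by
    have h := hm2R; rw [hRdef] at h; exact_mod_cast h
  -- choose N
  set M : ℕ := 8 * n / m with hMdef
  have hM1 : 1 ≤ M := by
    rw [hMdef, Nat.le_div_iff_mul_le hm0]
    have h : 1 * (m:ℝ) ≤ 8 * R := by linarith
    rw [hRdef] at h; exact_mod_cast h
  obtain ⟨N, hNp, hNM1, hNM2⟩ := Nat.exists_prime_lt_and_le_two_mul M (by omega)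
  have hmN16 : m * N ≤ 16 * n := by
    have h1 : m * M ≤ 8 * n := by
      rw [hMdef, Nat.mul_comm]; exact Nat.div_mul_le_self _ _
    calc m * N ≤ m * (2 * M) := Nat.mul_le_mul_left m hNM2
    _ = 2 * (m * M) := by ring
    _ ≤ 2 * (8 * n) := Nat.mul_le_mul_left 2 h1
    _ = 16 * n := by ring
  have h8nmN : 8 * n < m * N := by
    have hdm := Nat.div_add_mod (8*n) m
    have hmod := Nat.mod_lt (8*n) hm0
    have h3 : 8 * n < m * M + m := by
      rw [hMdef]
      nth_rewrite 1 [← hdm]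
      exact Nat.add_lt_add_left hmod _
    have h4 : m * M + m ≤ m * N := by
      have h5 : m * (M + 1) ≤ m * N := Nat.mul_le_mul_left m (by omega)
      rwa [Nat.mul_succ] at h5
    exact lt_of_lt_of_le h3 h4
  have hmN16R : (m:ℝ) * (N:ℝ) ≤ 16 * R := by
    rw [hRdef]; exact_mod_cast hmN16
  have h8RmN : 8 * R < (m:ℝ) * N := by
    rw [hRdef]; exact_mod_cast h8nmN
  have hNpos : (0:ℝ) < (N:ℝ) := by
    have := hNp.two_le; exact_mod_cast Nat.pos_of_ne_zero (by omega)
  have hmRpos : (0:ℝ) < (m:ℝ) := by exact_mod_cast hm0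
  -- N ≥ r^2 = √R
  have hNr2 : r^2 ≤ (N:ℝ) := by
    -- 8R < mN ≤ 64 r N, so N > R/(8r) = r^3/8 ≥ r^2
    have h1 : 8 * R < 64 * r * N := by nlinarith only [h8RmN, hm64r, hNpos]
    have h2 : r^3 ≤ 8 * (N:ℝ) := by nlinarith only [h1, hr4, hr0, hr8]
    nlinarith only [h2, hr8, hr0]
  have hNu : u < N := by
    have h1 : ((u:ℝ)+1)^2 ≤ (r^2)^2 := by nlinarith only [hr4, hRu]
    have h2 : (u:ℝ)+1 ≤ r^2 := by nlinarith only [h1, sq_nonneg ((u:ℝ)+1), hr0, sq_nonneg r]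
    have h3 : (u:ℝ) < (N:ℝ) := by linarith only [h2, hNr2]
    exact_mod_cast h3
  -- log log N bounds
  have hN16R : (N:ℝ) ≤ 16 * R := by
    have h1m : (1:ℝ) ≤ (m:ℝ) := by exact_mod_cast hm0
    have h2 : 1 * (N:ℝ) ≤ (m:ℝ) * N := mul_le_mul_of_nonneg_right h1m hNpos.le
    linarith only [h2, hmN16R]
  have hlogNlb : Real.log R / 2 ≤ Real.log N := by
    have h1 : Real.log (r^2) ≤ Real.log N :=
      (Real.log_le_log_iff (by positivity) hNpos).mpr hNr2
    rw [Real.log_pow] at h1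
    rw [hlogr]
    push_cast at h1
    linarith only [h1]
  have hlogNub : Real.log N ≤ 2 * Real.log R := by
    have h1 : Real.log N ≤ Real.log (16 * R) :=
      (Real.log_le_log_iff hNpos (by positivity)).mpr hN16R
    rw [Real.log_mul (by norm_num) (ne_of_gt hRpos)] at h1
    have h2 : Real.log 16 ≤ Real.log R := by
      have h4 : Real.log 16 = 2 * Real.log 4 := by
        rw [show (16:ℝ) = 4^2 by norm_num, Real.log_pow]; norm_num
      linarith only [hlog4le, hlogR8, h4]
    linarith only [h1, h2]
  have hlogNpos : 0 < Real.log N := by linarith only [hlogNlb, hlogR8]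
  have hLLNub : Real.log (Real.log N) ≤ L + 1 := by
    have h1 : Real.log (Real.log N) ≤ Real.log (2 * Real.log R) :=
      (Real.log_le_log_iff hlogNpos (by positivity)).mpr hlogNub
    rw [Real.log_mul (by norm_num) (ne_of_gt hlogRpos)] at h1
    have h2 : Real.log 2 ≤ 1 := by
      have := Real.log_le_sub_one_of_pos (show (0:ℝ) < 2 by norm_num); linarith
    rw [hLdef]
    linarith only [h1, h2]
  have hLLNlb : L - 1 ≤ Real.log (Real.log N) := by
    have h1 : Real.log (Real.log R / 2) ≤ Real.log (Real.log N) :=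
      (Real.log_le_log_iff (by positivity) hlogNpos).mpr hlogNlb
    rw [Real.log_div (ne_of_gt hlogRpos) (by norm_num)] at h1
    have h2 : Real.log 2 ≤ 1 := by
      have := Real.log_le_sub_one_of_pos (show (0:ℝ) < 2 by norm_num); linarith
    rw [hLdef]
    linarith only [h1, h2]
  have hWgoal1 : (1/8 : ℝ) * Real.log (Real.log N) ≤ (W:ℝ) := by linarith only [hLLNub, hWlb]
  have hWgoal2 : (W:ℝ) ≤ (1/2 : ℝ) * Real.log (Real.log N) := by linarith only [hLLNlb, hWub, hL7]
  -- the finite set of elements of A₀ in [n, 2n]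
  set T : Finset ℕ := (Finset.Icc n (2*n)).filter (fun p => p ∈ A₀ ∧ p ∈ Ph F) with hTdef
  have hTset : A₀ ∩ Ph F ∩ Set.Icc n (2*n) = (↑T : Set ℕ) := by
    ext p
    simp only [hTdef, Finset.coe_filter, Finset.mem_Icc, Set.mem_setOf_eq,
      Set.mem_inter_iff, Set.mem_Icc]
    tauto
  have hgood' : α₀ < Real.log R / φ R * T.card := by
    have hg := hgood
    rw [hTset, Nat.card_coe_set_eq, Set.ncard_coe_finset] at hg
    exact hg
  have hφRx₀ : F.x₀ ≤ φ R := hφ₃ R hhx₀R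
  have hφRpos : 0 < φ R := by linarith only [hφRx₀, hx₀1]
  have hTcard_lb : α₀ * φ R / Real.log R < (T.card:ℝ) := by
    rw [div_lt_iff₀ hlogRpos]
    rw [div_mul_eq_mul_div, lt_div_iff₀ hφRpos] at hgood'
    linarith only [hgood', (mul_comm (Real.log R) ((T.card:ℕ):ℝ) : _)]
  -- pigeonhole over coprime residues
  set RS : Finset ℕ := (Finset.range m).filter (fun b => m.Coprime b) with hRSdef
  have hRScard : RS.card = Nat.totient m := by
    rw [Nat.totient]
  have hRSpos : 0 < RS.card := by rw [hRScard]; exact Nat.totient_pos.mpr hm0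
  have hQpos : (0:ℝ) < (Nat.totient m : ℝ) := by
    exact_mod_cast Nat.totient_pos.mpr hm0
  have hmaps : ∀ p ∈ T, p % m ∈ RS := by
    intro p hp
    rw [hTdef, Finset.mem_filter, Finset.mem_Icc] at hp
    obtain ⟨⟨hpn, hp2n⟩, hpA₀, hpPh⟩ := hp
    have hpprime : p.Prime := hpPh.1
    have hmp : m < p := by omega
    have hcop : Nat.Coprime p m := (Nat.Prime.coprime_iff_not_dvd hpprime).mpr
      (fun hdvd => absurd (Nat.le_of_dvd hm0 hdvd) (by omega))
    rw [hRSdef, Finset.mem_filter, Finset.mem_range]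
    refine ⟨Nat.mod_lt _ hm0, ?_⟩
    have hgcd : Nat.gcd m p = 1 := Nat.coprime_comm.mp hcop
    unfold Nat.Coprime
    rw [Nat.gcd_comm, ← Nat.gcd_rec]
    exact hgcd
  have hfib : T.card = ∑ b ∈ RS, ((T.filter (fun p => p % m = b)).card) :=
    Finset.card_eq_sum_card_fiberwise hmaps
  obtain ⟨b, hbRS, hbfib⟩ : ∃ b ∈ RS, (T.card:ℝ)/(Nat.totient m) ≤
      ((T.filter (fun p => p % m = b)).card : ℝ) := by
    apply Finset.exists_le_of_sum_le (Finset.card_pos.mp hRSpos)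
    have hRHS : ∑ b ∈ RS, ((T.filter (fun p => p % m = b)).card : ℝ) = (T.card:ℝ) := by
      rw [hfib]; push_cast; ring
    rw [hRHS, Finset.sum_const, nsmul_eq_mul, hRScard]
    field_simp
    exact le_rfl
  rw [hRSdef, Finset.mem_filter, Finset.mem_range] at hbRS
  obtain ⟨hbm, hbcop⟩ := hbRS
  have hble : b ≤ m - 1 := by omega
  have hbgcd : Nat.gcd b m = 1 := Nat.coprime_comm.mp hbcop
  set Fb : Finset ℕ := T.filter (fun p => p % m = b) with hFbdef
  have hFb : ∀ p ∈ Fb, p ∈ A₀ ∧ p ∈ Ph F ∧ n ≤ p ∧ p ≤ 2*n ∧ p % m = b ∧ m * (p/m) + b = p := by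
    intro p hp
    rw [hFbdef, Finset.mem_filter, hTdef, Finset.mem_filter, Finset.mem_Icc] at hp
    obtain ⟨⟨⟨hpn, hp2n⟩, hA, hP⟩, hmod⟩ := hp
    have hdm := Nat.div_add_mod p m
    exact ⟨hA, hP, hpn, hp2n, hmod, by omega⟩
  have hinj : ∀ p₁ ∈ Fb, ∀ p₂ ∈ Fb, p₁ / m = p₂ / m → p₁ = p₂ := by
    intro p₁ h1 p₂ h2 heq
    have e1 := (hFb p₁ h1).2.2.2.2.2
    have e2 := (hFb p₂ h2).2.2.2.2.2
    rw [← e1, ← e2, heq]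
  have hkN : ∀ p ∈ Fb, 2 * (p / m) < N := by
    intro p hp
    obtain ⟨_, _, hpn, hp2n, hmod, e1⟩ := hFb p hp
    have e2 : m * (p/m) ≤ p := by linarith only [e1]
    have h3 : m * (2 * (p/m)) = 2 * (m * (p/m)) := by ring
    have h4 : 2 * (m * (p/m)) ≤ 2 * p := by linarith only [e2]
    have h5 : m * (2*(p/m)) < m * N := by linarith only [h3, h4, hp2n, h8nmN]
    exact lt_of_mul_lt_mul_left h5 (Nat.zero_le m)
  set A : Finset ℕ := Fb.image (fun p => p / m) with hAdef
  have hAsub : A ⊆ Finset.Icc 1 (N / 2) := by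
    intro k hk
    rw [hAdef, Finset.mem_image] at hk
    obtain ⟨p, hp, rfl⟩ := hk
    rw [Finset.mem_Icc]
    obtain ⟨_, _, hpn, hp2n, hmod, e1⟩ := hFb p hp
    constructor
    · rw [Nat.one_le_div_iff hm0]; linarith only [hm2n, hpn]
    · rw [Nat.le_div_iff_mul_le (by norm_num : 0 < 2)]
      linarith only [hkN p hp]
  have hnoAP3 : ¬ ∃ a ∈ A, ∃ d : ℕ, d ≠ 0 ∧ a + d ∈ A ∧ a + 2 * d ∈ A := by
    rintro ⟨a, ha, d, hd, had, ha2d⟩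
    rw [hAdef, Finset.mem_image] at ha had ha2d
    obtain ⟨p₁, hp₁, he₁⟩ := ha
    obtain ⟨p₂, hp₂, he₂⟩ := had
    obtain ⟨p₃, hp₃, he₃⟩ := ha2d
    have e₁ := (hFb p₁ hp₁).2.2.2.2.2
    have e₂ := (hFb p₂ hp₂).2.2.2.2.2
    have e₃ := (hFb p₃ hp₃).2.2.2.2.2
    apply hnoAP
    refine ⟨p₁, (hFb p₁ hp₁).1, m * d, Nat.mul_ne_zero (by omega) hd, ?_, ?_⟩
    · have hpe : p₁ + m * d = p₂ := by rw [← e₁, ← e₂, he₁, he₂]; ring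
      rw [hpe]; exact (hFb p₂ hp₂).1
    · have hpe : p₁ + 2 * (m * d) = p₃ := by rw [← e₁, ← e₃, he₁, he₃]; ring
      rw [hpe]; exact (hFb p₃ hp₃).1
  have hsum_eq : ∑ k ∈ A, lamh F φ b m N k = ∑ p ∈ Fb, lamh F φ b m N (p / m) := by
    rw [hAdef]; exact Finset.sum_image hinj
  set t₀ : ℝ := (Nat.totient m : ℝ) * Real.log R / (6 * ((m:ℝ) * N) * φ R / R) with ht₀
  have ht₀pos : 0 < t₀ := by
    rw [ht₀]
    apply div_pos (mul_pos hQpos hlogRpos)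
    positivity
  have hterm : ∀ p ∈ Fb, t₀ ≤ lamh F φ b m N (p / m) := by
    intro p hp
    obtain ⟨hpA, hpPh, hpn, hp2n, hmod, e1⟩ := hFb p hp
    have hkN' : p / m ≤ N := by linarith only [hkN p hp]
    have hcond : p / m ≤ N ∧ m * (p/m) + b ∈ Ph F := ⟨hkN', by rw [e1]; exact hpPh⟩
    rw [lamh, if_pos hcond]
    have hc1 : ((m:ℝ) * ((p/m : ℕ):ℝ) + (b:ℝ)) = (p:ℝ) := by
      rw [show ((m:ℝ) * ((p/m:ℕ):ℝ) + (b:ℝ)) = ((m * (p/m) + b : ℕ) : ℝ) by push_cast; ring, e1]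
    have hc2 : (((m * (p/m) + b : ℕ)) : ℝ) = (p:ℝ) := by rw [e1]
    rw [hc1, hc2]
    have hpR : R ≤ (p:ℝ) := by rw [hRdef]; exact_mod_cast hpn
    have hp2R : (p:ℝ) ≤ 2 * R := by
      rw [hRdef]
      have : (p:ℝ) ≤ ((2*n : ℕ):ℝ) := by exact_mod_cast hp2n
      push_cast at this
      linarith only [this]
    have hp2h : 2 * F.toFun F.x₀ ≤ (p:ℝ) := by linarith only [hpR, hR2h]
    obtain ⟨hDpos, hDle⟩ := hDb (p:ℝ) hp2h
    have hφp : φ (p:ℝ) ≤ 3 * φ R := by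
      have h1 : φ (p:ℝ) ≤ φ (2 * R) := hpm _ _ (by linarith only [hpR, hR2h, hhx₀1]) hp2R
      linarith only [h1, hdouble R hR2h]
    have hφppos : 0 < φ (p:ℝ) := by
      have := hφ₃ (p:ℝ) (by linarith only [hpR, hhx₀R])
      linarith only [this, hx₀1]
    have hlogp : Real.log R ≤ Real.log (p:ℝ) := (Real.log_le_log_iff hRpos (by linarith only [hpR, hRpos])).mpr hpR
    have hden : (m:ℝ) * N * deriv φ (p:ℝ) ≤ 6 * ((m:ℝ) * N) * φ R / R := by
      have h1 : deriv φ (p:ℝ) ≤ 6 * φ R / R := by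
        have h2 : 2 * φ (p:ℝ) / (p:ℝ) ≤ 6 * φ R / R := by
          rw [div_le_div_iff₀ (by linarith only [hpR, hRpos]) hRpos]
          have w1 : 2 * φ (p:ℝ) * R ≤ 2 * (3 * φ R) * R := by
            have := mul_le_mul_of_nonneg_right hφp hRpos.le
            linarith only [this]
          have w2 : 2 * (3 * φ R) * R ≤ 2 * (3 * φ R) * (p:ℝ) := by
            have := mul_le_mul_of_nonneg_left hpR (by positivity : (0:ℝ) ≤ 2 * (3 * φ R))
            linarith only [this]
          linarith only [w1, w2]
        linarith only [hDle, h2]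
      calc (m:ℝ) * N * deriv φ (p:ℝ) ≤ (m:ℝ) * N * (6 * φ R / R) :=
            mul_le_mul_of_nonneg_left h1 (by positivity)
      _ = 6 * ((m:ℝ) * N) * φ R / R := by ring
    rw [ht₀]
    exact div_le_div₀ (mul_nonneg hQpos.le (le_trans hlogRpos.le hlogp))
      (mul_le_mul_of_nonneg_left hlogp hQpos.le)
      (mul_pos (by positivity) hDpos) hden
  have hTlb' : α₀ * φ R ≤ (T.card:ℝ) * Real.log R := by
    have h := hTcard_lb.le
    rw [div_le_iff₀ hlogRpos] at h
    linarith only [h]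
  have hmain : α₀ / 96 ≤ (T.card:ℝ) * Real.log R * R / (6 * ((m:ℝ)*N) * φ R) := by
    rw [div_le_div_iff₀ (by norm_num) (by positivity)]
    have q1 : α₀ * φ R * (6 * ((m:ℝ)*N)) ≤ α₀ * φ R * (96 * R) :=
      mul_le_mul_of_nonneg_left (by linarith only [hmN16R]) (by positivity)
    have q2 : (α₀ * φ R) * (96 * R) ≤ ((T.card:ℝ) * Real.log R) * (96 * R) :=
      mul_le_mul_of_nonneg_right hTlb' (by positivity)
    linarith only [q1, q2]
  have hTQ : (T.card:ℝ)/(Nat.totient m) * t₀ =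
      (T.card:ℝ) * Real.log R * R / (6 * ((m:ℝ)*N) * φ R) := by
    rw [ht₀]
    field_simp
  have hsum_ge : α₀ / 96 ≤ ∑ k ∈ A, lamh F φ b m N k := by
    rw [hsum_eq]
    have h1 : (Fb.card : ℝ) * t₀ ≤ ∑ p ∈ Fb, lamh F φ b m N (p / m) := by
      have h2 := Finset.card_nsmul_le_sum Fb _ t₀ hterm
      rwa [nsmul_eq_mul] at h2
    have h2 : (T.card:ℝ)/(Nat.totient m) * t₀ ≤ (Fb.card:ℝ) * t₀ :=
      mul_le_mul_of_nonneg_right hbfib ht₀pos.le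
    rw [hTQ] at h2
    linarith only [hmain, h1, h2]
  -- conclude
  have hmem : N ∈ {N : ℕ | N.Prime ∧
      ∃ A : Finset ℕ, A ⊆ Finset.Icc 1 (N / 2) ∧
      ∃ W : ℕ, (1 / 8 : ℝ) * Real.log (Real.log N) ≤ W ∧
        (W : ℝ) ≤ (1 / 2 : ℝ) * Real.log (Real.log N) ∧
        (¬ ∃ a ∈ A, ∃ d : ℕ, d ≠ 0 ∧ a + d ∈ A ∧ a + 2 * d ∈ A) ∧
        ∃ b : ℕ, b ≤ primorial W - 1 ∧ Nat.gcd b (primorial W) = 1 ∧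
          α₀ / 96 ≤ ∑ n ∈ A, lamh F φ b (primorial W) N n} := by
    refine ⟨hNp, A, hAsub, W, hWgoal1, hWgoal2, hnoAP3, b, ?_, ?_, ?_⟩
    · rw [← hmdef]; exact hble
    · rw [← hmdef]; exact hbgcd
    · rw [← hmdef]; exact hsum_ge
  exact absurd (hu hmem) (by omega)
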